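/- arXiv:1908.09826 — 4 statements merged into one kernel-verified Lean document; each statement's English description precedes it below -/
import Mathlib

section
/- Let P, K_i, K_j be positive integers and a ≥ 1 a real scalar with ⌈a·K_i⌉ + K_j ≤ P. Then C(P - ⌈a·K_i⌉, K_j)/C(P, K_j) ≤ (C(P - K_i, K_j)/C(P, K_j))^a. -/
open Finset

private lemma stmt_6_step (n k : ℕ) (hk : k ≤ n) (hn : 0 < n) :
    ((n - 1).choose k : ℝ) = (((n - k : ℕ) : ℝ) / (n : ℝ)) * (n.choose k : ℝ) := by
  have key := Nat.choose_mul_succ_eq (n - 1) k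
  have hn1 : n - 1 + 1 = n := by omega
  rw [hn1] at key
  have hn' : (n : ℝ) ≠ 0 := Nat.cast_ne_zero.mpr hn.ne'
  have keyR : ((n - 1).choose k : ℝ) * n = (n.choose k : ℝ) * ((n - k : ℕ) : ℝ) := by
    exact_mod_cast congrArg (Nat.cast : ℕ → ℝ) key
  rw [Nat.cast_sub hk] at keyR
  rw [Nat.cast_sub hk]
  field_simp
  linarith [keyR]

private lemma stmt_6_prod (P Kj : ℕ) : ∀ t, t + Kj ≤ P →
    ((P - t).choose Kj : ℝ) =
      (∏ i ∈ range t, (((P - i - Kj : ℕ) : ℝ) / ((P - i : ℕ) : ℝ))) * (P.choose Kj : ℝ)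
  | 0, _ => by simp
  | (t+1), h => by
      have h' : t + Kj ≤ P := by omega
      have ih := stmt_6_prod P Kj t h'
      rw [Finset.prod_range_succ]
      have h1 : P - (t+1) = (P - t) - 1 := by omega
      have h2 : Kj ≤ P - t := by omega
      have h3 : 0 < P - t := by omega
      rw [h1, stmt_6_step (P - t) Kj h2 h3, ih]
      ring

/-- C(P-⌈aK_i⌉, K_j)/C(P,K_j) ≤ (C(P-K_i,K_j)/C(P,K_j))^a for real a ≥ 1. -/
theorem stmt_6 (P Ki Kj : ℕ) (hP : 0 < P) (hKi : 0 < Ki) (hKj : 0 < Kj)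
    (a : ℝ) (ha : 1 ≤ a) (h : ⌈a * (Ki : ℝ)⌉₊ + Kj ≤ P) :
    ((P - ⌈a * (Ki : ℝ)⌉₊).choose Kj : ℝ) / (P.choose Kj : ℝ)
      ≤ (((P - Ki).choose Kj : ℝ) / (P.choose Kj : ℝ)) ^ a := by
  set m := ⌈a * (Ki : ℝ)⌉₊ with hmdef
  have haKi : a * (Ki : ℝ) ≤ (m : ℝ) := Nat.le_ceil _
  have hKim : Ki ≤ m := by
    have hKiR0 : (0:ℝ) < (Ki:ℝ) := by exact_mod_cast hKi
    have h1 : (Ki : ℝ) ≤ a * Ki := by nlinarith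
    exact_mod_cast h1.trans haKi
  have hmP : m + Kj ≤ P := h
  -- the ratio sequence
  set s : ℕ → ℝ := fun i => (((P - i - Kj : ℕ) : ℝ) / ((P - i : ℕ) : ℝ)) with hsdef
  have hs_nonneg : ∀ i, 0 ≤ s i := by
    intro i; simp only [hsdef]; positivity
  have hs_pos : ∀ i, i < m → 0 < s i := by
    intro i hi
    have h1 : 0 < P - i - Kj := by omega
    have h2 : 0 < P - i := by omega
    exact div_pos (by exact_mod_cast h1) (by exact_mod_cast h2)
  -- antitone on [0, m)
  have hs_anti : ∀ i j, i ≤ j → j < m → s j ≤ s i := by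
    intro i j hij hjm
    have hiP : i + Kj ≤ P := by omega
    have hjP : j + Kj ≤ P := by omega
    have e1 : ((P - i - Kj : ℕ) : ℝ) = (P : ℝ) - i - Kj := by
      rw [Nat.sub_sub, Nat.cast_sub (by omega : i + Kj ≤ P)]; push_cast; ring
    have e2 : ((P - j - Kj : ℕ) : ℝ) = (P : ℝ) - j - Kj := by
      rw [Nat.sub_sub, Nat.cast_sub (by omega : j + Kj ≤ P)]; push_cast; ring
    have e3 : ((P - i : ℕ) : ℝ) = (P : ℝ) - i := by
      rw [Nat.cast_sub (by omega : i ≤ P)]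
    have e4 : ((P - j : ℕ) : ℝ) = (P : ℝ) - j := by
      rw [Nat.cast_sub (by omega : j ≤ P)]
    have hdi : (0 : ℝ) < (P : ℝ) - i := by
      have : i < P := by omega
      have := Nat.cast_lt (α := ℝ).mpr this
      linarith
    have hdj : (0 : ℝ) < (P : ℝ) - j := by
      have : j < P := by omega
      have := Nat.cast_lt (α := ℝ).mpr this
      linarith
    have hijR : (i : ℝ) ≤ j := Nat.cast_le.mpr hij
    have hKjR : (0 : ℝ) ≤ Kj := Nat.cast_nonneg _
    simp only [hsdef, e1, e2, e3, e4]
    rw [div_le_div_iff₀ hdj hdi]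
    nlinarith
  set A : ℝ := ∏ i ∈ range Ki, s i with hAdef
  set B : ℝ := ∏ i ∈ Ico Ki m, s i with hBdef
  have hA_pos : 0 < A := Finset.prod_pos (fun i hi => hs_pos i (lt_of_lt_of_le (mem_range.mp hi) hKim))
  have hB_nonneg : 0 ≤ B := Finset.prod_nonneg (fun i _ => hs_nonneg i)
  have hAB : (∏ i ∈ range m, s i) = A * B := by
    rw [hAdef, hBdef, Finset.range_eq_Ico, Finset.range_eq_Ico]
    exact (Finset.prod_Ico_consecutive s (Nat.zero_le Ki) hKim).symm
  -- bound B
  have hs0 : 0 ≤ s (Ki - 1) := hs_nonneg _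
  have hB_le : B ≤ s (Ki - 1) ^ (m - Ki) := by
    calc B ≤ ∏ _i ∈ Ico Ki m, s (Ki - 1) := by
            apply Finset.prod_le_prod (fun i _ => hs_nonneg i)
            intro i hi
            have hi' := Finset.mem_Ico.mp hi
            exact hs_anti (Ki - 1) i (by omega) hi'.2
      _ = s (Ki - 1) ^ (m - Ki) := by rw [Finset.prod_const, Nat.card_Ico]
  have hA_ge : s (Ki - 1) ^ Ki ≤ A := by
    calc s (Ki - 1) ^ Ki = ∏ _i ∈ range Ki, s (Ki - 1) := by
            rw [Finset.prod_const, Finset.card_range]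
      _ ≤ A := by
            apply Finset.prod_le_prod (fun i _ => hs0)
            intro i hi
            have hi' := mem_range.mp hi
            exact hs_anti i (Ki - 1) (by omega) (by omega)
  -- key inequality (A*B)^Ki ≤ A^m
  have hkey : (A * B) ^ Ki ≤ A ^ m := by
    calc (A * B) ^ Ki = A ^ Ki * B ^ Ki := mul_pow A B Ki
      _ ≤ A ^ Ki * (s (Ki - 1) ^ (m - Ki)) ^ Ki := by
          gcongr
      _ = A ^ Ki * (s (Ki - 1) ^ Ki) ^ (m - Ki) := by
          rw [← pow_mul, ← pow_mul, Nat.mul_comm]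
      _ ≤ A ^ Ki * A ^ (m - Ki) := by
          gcongr <;> first | exact pow_nonneg hs0 _ | exact hA_ge
      _ = A ^ m := by rw [← pow_add]; congr 1; omega
  -- express the choose ratios
  have hCP : 0 < (P.choose Kj : ℝ) := by
    exact_mod_cast Nat.choose_pos (by omega : Kj ≤ P)
  have hCm : ((P - m).choose Kj : ℝ) / (P.choose Kj : ℝ) = A * B := by
    rw [stmt_6_prod P Kj m hmP, hAB, mul_div_assoc, div_self hCP.ne', mul_one]
  have hCKi : ((P - Ki).choose Kj : ℝ) / (P.choose Kj : ℝ) = A := by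
    rw [stmt_6_prod P Kj Ki (by omega), mul_div_assoc, div_self hCP.ne', mul_one, hAdef]
  rw [hCm, hCKi]
  have hA1 : A ≤ 1 := by
    rw [← hCKi]
    rw [div_le_one hCP]
    exact_mod_cast Nat.choose_le_choose Kj (Nat.sub_le P Ki)
  -- A*B ≤ A^(m/Ki) via Ki-th roots
  have hKiR : (0 : ℝ) < Ki := Nat.cast_pos.mpr hKi
  have hABnn : 0 ≤ A * B := mul_nonneg hA_pos.le hB_nonneg
  have step1 : A * B ≤ A ^ ((m : ℝ) * (Ki : ℝ)⁻¹) := by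
    have h1 : ((A * B) ^ Ki) ^ ((Ki : ℝ)⁻¹) ≤ (A ^ m) ^ ((Ki : ℝ)⁻¹) :=
      Real.rpow_le_rpow (pow_nonneg hABnn _) hkey (by positivity)
    rwa [Real.pow_rpow_inv_natCast hABnn hKi.ne', ← Real.rpow_natCast A m,
      ← Real.rpow_mul hA_pos.le] at h1
  have step2 : A ^ ((m : ℝ) * (Ki : ℝ)⁻¹) ≤ A ^ a := by
    apply Real.rpow_le_rpow_of_exponent_ge hA_pos hA1
    rw [← div_eq_mul_inv]
    exact (le_div_iff₀ hKiR).mpr haKi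
  exact step1.trans step2
end

section
/- Let P, K₁, K₂ be positive integers with K₁ + K₂ ≤ P. Then C(P-K₁, K₂)/C(P, K₂) ≤ e^{-K₁K₂/P}. -/
lemma descFac_aux (n m k : ℕ) (hm : m ≤ n) (hk : k ≤ n - m) :
    (n - m).descFactorial k * n ^ k ≤ (n - m) ^ k * n.descFactorial k := by
  induction k with
  | zero => simp
  | succ k ih =>
    have hk' : k ≤ n - m := Nat.le_of_succ_le hk
    have ih' := ih hk'
    have hkn : k ≤ n := le_trans hk' (Nat.sub_le _ _)
    rw [Nat.descFactorial_succ, Nat.descFactorial_succ, pow_succ, pow_succ]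
    have key : (n - m - k) * n ≤ (n - m) * (n - k) := by
      zify [hm, hk', hkn]
      nlinarith [mul_nonneg (Int.ofNat_nonneg m) (Int.ofNat_nonneg k)]
    calc (n - m - k) * (n - m).descFactorial k * (n ^ k * n)
        = ((n - m - k) * n) * ((n - m).descFactorial k * n ^ k) := by ring
      _ ≤ ((n - m) * (n - k)) * ((n - m) ^ k * n.descFactorial k) :=
          Nat.mul_le_mul key ih'
      _ = (n - m) ^ k * (n - m) * ((n - k) * n.descFactorial k) := by ring

/-- C(P-K₁,K₂)/C(P,K₂) ≤ e^{-K₁K₂/P}. -/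
theorem stmt_7 (P K₁ K₂ : ℕ) (hP : 0 < P) (hK₁ : 0 < K₁) (hK₂ : 0 < K₂)
    (h : K₁ + K₂ ≤ P) :
    ((P - K₁).choose K₂ : ℝ) / (P.choose K₂ : ℝ)
      ≤ Real.exp (-((K₁ : ℝ) * K₂ / P)) := by
  have hm : K₁ ≤ P := le_trans (Nat.le_add_right _ _) h
  have hk : K₂ ≤ P - K₁ := by omega
  have hkP : K₂ ≤ P := by omega
  have hPpos : (0 : ℝ) < P := by exact_mod_cast hP
  have hchoosePos : (0 : ℝ) < P.choose K₂ := by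
    exact_mod_cast Nat.choose_pos hkP
  have hfacPos : (0 : ℝ) < (Nat.factorial K₂) := by exact_mod_cast Nat.factorial_pos K₂
  -- Step 1: choose ratio ≤ ((P-K₁)/P)^K₂
  have hnat := descFac_aux P K₁ K₂ hm hk
  rw [Nat.descFactorial_eq_factorial_mul_choose,
      Nat.descFactorial_eq_factorial_mul_choose] at hnat
  have hreal : ((Nat.factorial K₂) * (P - K₁).choose K₂ * P ^ K₂ : ℝ)
      ≤ (P - K₁ : ℕ) ^ K₂ * ((Nat.factorial K₂) * P.choose K₂) := by exact_mod_cast hnat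
  have hpow : (0 : ℝ) < (P : ℝ) ^ K₂ := pow_pos hPpos _
  have step1 : ((P - K₁).choose K₂ : ℝ) / (P.choose K₂ : ℝ)
      ≤ ((P : ℝ) - K₁) ^ K₂ / (P : ℝ) ^ K₂ := by
    rw [div_le_div_iff₀ hchoosePos hpow]
    have : ((P : ℝ) - K₁) = ((P - K₁ : ℕ) : ℝ) := by
      rw [Nat.cast_sub hm]
    rw [this]
    nlinarith [hreal, hfacPos]
  -- Step 2: ((P-K₁)/P)^K₂ ≤ exp(-K₁K₂/P)
  have hbase_nonneg : (0 : ℝ) ≤ ((P : ℝ) - K₁) / P := by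
    apply div_nonneg _ (le_of_lt hPpos)
    have : (K₁ : ℝ) ≤ P := by exact_mod_cast hm
    linarith
  have hbase : ((P : ℝ) - K₁) / P ≤ Real.exp (-((K₁ : ℝ) / P)) := by
    have := Real.add_one_le_exp (-((K₁ : ℝ) / P))
    have hfield : ((P : ℝ) - K₁) / P = -((K₁ : ℝ) / P) + 1 := by
      field_simp
      ring
    linarith
  calc ((P - K₁).choose K₂ : ℝ) / (P.choose K₂ : ℝ)
      ≤ ((P : ℝ) - K₁) ^ K₂ / (P : ℝ) ^ K₂ := step1
    _ = (((P : ℝ) - K₁) / P) ^ K₂ := by rw [div_pow]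
    _ ≤ Real.exp (-((K₁ : ℝ) / P)) ^ K₂ := pow_le_pow_left₀ hbase_nonneg hbase _
    _ = Real.exp (-((K₁ : ℝ) * K₂ / P)) := by
        rw [← Real.exp_nat_mul]
        congr 1
        ring
end

section
/- Let P, K₁, K₂ be positive integers with 2·K₂ ≤ P and K₁ ≤ K₂. Define p = 1 - C(P-K₁,K₂)/C(P,K₂). If p ≤ 1/2, then p ≥ K₁K₂/(2P). -/
lemma df_id (m k : ℕ) : (m + 1 - k) * (m + 1).descFactorial k = (m + 1) * m.descFactorial k := by
  cases k with
  | zero => simp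
  | succ j =>
    rw [Nat.succ_descFactorial_succ, Nat.descFactorial_succ, Nat.succ_sub_succ]
    ring

lemma df_le (P K₂ : ℕ) : ∀ m, m + K₂ ≤ P →
    P ^ m * (P - m).descFactorial K₂ ≤ (P - K₂) ^ m * P.descFactorial K₂ := by
  intro m
  induction m with
  | zero => simp
  | succ m ih =>
    intro h
    have h' : m + K₂ ≤ P := by omega
    have hn : P - m = (P - (m + 1)) + 1 := by omega
    have key : P * (P - (m + 1)).descFactorial K₂ ≤ (P - K₂) * (P - m).descFactorial K₂ := by
      have hid : (P - m - K₂) * (P - m).descFactorial K₂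
          = (P - m) * (P - (m + 1)).descFactorial K₂ := by
        rw [hn]; simpa using df_id (P - (m + 1)) K₂
      have hcross : P * (P - m - K₂) ≤ (P - K₂) * (P - m) := by
        have : P * (P - m - K₂) = P * (P - m) - P * K₂ := by
          rw [Nat.mul_sub]
        have h2 : (P - K₂) * (P - m) = P * (P - m) - K₂ * (P - m) := by
          rw [Nat.sub_mul]
        rw [this, h2]
        have hk : K₂ * (P - m) ≤ P * K₂ := by
          rw [Nat.mul_comm]; exact Nat.mul_le_mul (Nat.sub_le P m) (le_refl K₂)
        exact Nat.sub_le_sub_left hk _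
      have hpos : 0 < P - m := by omega
      apply Nat.le_of_mul_le_mul_left _ hpos
      calc (P - m) * (P * (P - (m + 1)).descFactorial K₂)
          = P * ((P - m) * (P - (m + 1)).descFactorial K₂) := by ring
        _ = P * ((P - m - K₂) * (P - m).descFactorial K₂) := by rw [hid]
        _ = (P * (P - m - K₂)) * (P - m).descFactorial K₂ := by ring
        _ ≤ ((P - K₂) * (P - m)) * (P - m).descFactorial K₂ :=
            Nat.mul_le_mul_right _ hcross
        _ = (P - m) * ((P - K₂) * (P - m).descFactorial K₂) := by ring
    calc P ^ (m + 1) * (P - (m + 1)).descFactorial K₂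
        = P ^ m * (P * (P - (m + 1)).descFactorial K₂) := by ring
      _ ≤ P ^ m * ((P - K₂) * (P - m).descFactorial K₂) := Nat.mul_le_mul_left _ key
      _ = (P - K₂) * (P ^ m * (P - m).descFactorial K₂) := by ring
      _ ≤ (P - K₂) * ((P - K₂) ^ m * P.descFactorial K₂) := Nat.mul_le_mul_left _ (ih h')
      _ = (P - K₂) ^ (m + 1) * P.descFactorial K₂ := by ring

lemma pow_one_sub_le (x : ℝ) (hx0 : 0 ≤ x) (hx1 : x ≤ 1) :
    ∀ n : ℕ, (n : ℝ) * x ≤ 1 → (1 - x) ^ n ≤ 1 - n * x / 2 := by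
  intro n
  induction n with
  | zero => simp
  | succ n ih =>
    intro h
    have hn : (n : ℝ) * x ≤ 1 := by push_cast at h ⊢; nlinarith
    have ihn := ih hn
    have h1 : (0:ℝ) ≤ 1 - x := by linarith
    calc (1 - x) ^ (n + 1) = (1 - x) ^ n * (1 - x) := by ring
      _ ≤ (1 - n * x / 2) * (1 - x) := mul_le_mul_of_nonneg_right ihn h1
      _ ≤ 1 - (n + 1 : ℕ) * x / 2 := by push_cast at h ⊢; nlinarith

/-- If p = 1 - C(P-K₁,K₂)/C(P,K₂) ≤ 1/2 (with 2K₂ ≤ P, K₁ ≤ K₂), then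
p ≥ K₁K₂/(2P). -/
theorem stmt_8 (P K₁ K₂ : ℕ) (hP : 0 < P) (hK₁ : 0 < K₁) (hK₂ : 0 < K₂)
    (h2 : 2 * K₂ ≤ P) (h12 : K₁ ≤ K₂)
    (p : ℝ) (hp : p = 1 - ((P - K₁).choose K₂ : ℝ) / (P.choose K₂ : ℝ))
    (hphalf : p ≤ 1 / 2) :
    (K₁ : ℝ) * K₂ / (2 * P) ≤ p := by
  have hKP : K₁ + K₂ ≤ P := by omega
  have hK₂P : K₂ ≤ P := by omega
  -- positivity facts
  have hPpos : (0:ℝ) < P := by exact_mod_cast hP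
  have hchoosePpos : 0 < P.choose K₂ := Nat.choose_pos hK₂P
  have hcBpos : (0:ℝ) < (P.choose K₂ : ℝ) := by exact_mod_cast hchoosePpos
  set q : ℝ := ((P - K₁).choose K₂ : ℝ) / (P.choose K₂ : ℝ) with hq
  have hqhalf : 1 / 2 ≤ q := by rw [hp] at hphalf; linarith
  set x : ℝ := (K₂ : ℝ) / P with hxdef
  have hx0 : 0 < x := div_pos (by exact_mod_cast hK₂) hPpos
  have hxhalf : x ≤ 1 / 2 := by
    rw [hxdef, div_le_div_iff₀ hPpos (by norm_num)]
    have : (2 * K₂ : ℝ) ≤ P := by exact_mod_cast h2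
    linarith
  have hx1 : x ≤ 1 := by linarith
  -- key bound : q ≤ (1 - x)^K₁
  have hqle : q ≤ (1 - x) ^ K₁ := by
    have hnat := df_le P K₂ K₁ hKP
    have hreal : (P:ℝ) ^ K₁ * ((P - K₁).descFactorial K₂ : ℝ)
        ≤ ((P - K₂ : ℕ) : ℝ) ^ K₁ * (P.descFactorial K₂ : ℝ) := by
      exact_mod_cast hnat
    have hdf1 : ((P - K₁).descFactorial K₂ : ℝ) = (K₂.factorial : ℝ) * ((P - K₁).choose K₂ : ℝ) := by
      exact_mod_cast Nat.descFactorial_eq_factorial_mul_choose _ _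
    have hdf2 : (P.descFactorial K₂ : ℝ) = (K₂.factorial : ℝ) * (P.choose K₂ : ℝ) := by
      exact_mod_cast Nat.descFactorial_eq_factorial_mul_choose _ _
    have hfacpos : (0:ℝ) < (K₂.factorial : ℝ) := by exact_mod_cast Nat.factorial_pos K₂
    have hsub : ((P - K₂ : ℕ) : ℝ) = (P : ℝ) - K₂ := by
      push_cast [Nat.cast_sub hK₂P]; ring
    have honemx : 1 - x = ((P - K₂ : ℕ) : ℝ) / P := by
      rw [hsub, hxdef]; field_simp
    rw [hdf1, hdf2] at hreal
    have hineq : (P:ℝ) ^ K₁ * ((P - K₁).choose K₂ : ℝ)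
        ≤ ((P - K₂ : ℕ) : ℝ) ^ K₁ * (P.choose K₂ : ℝ) := by
      nlinarith [hreal, hfacpos]
    rw [hq, honemx, div_pow, div_le_div_iff₀ hcBpos (pow_pos hPpos K₁)]
    calc ((P - K₁).choose K₂ : ℝ) * (P:ℝ) ^ K₁
        = (P:ℝ) ^ K₁ * ((P - K₁).choose K₂ : ℝ) := by ring
      _ ≤ ((P - K₂ : ℕ) : ℝ) ^ K₁ * (P.choose K₂ : ℝ) := hineq
  by_cases hcase : (K₁ : ℝ) * x ≤ 1
  · -- small case
    have hbound := pow_one_sub_le x hx0.le hx1 K₁ hcase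
    have : q ≤ 1 - (K₁ : ℝ) * x / 2 := le_trans hqle hbound
    have hgoal : (K₁ : ℝ) * K₂ / (2 * P) = (K₁ : ℝ) * x / 2 := by
      rw [hxdef]; field_simp
    rw [hp, hgoal]
    linarith
  · -- large case: contradiction with q ≥ 1/2
    exfalso
    push_neg at hcase
    have hbern : 1 + (K₁ : ℝ) * x ≤ (1 + x) ^ K₁ := by
      have := one_add_mul_le_pow (a := x) (by linarith) K₁
      linarith [this]
    have hprod : (1 - x) ^ K₁ * (1 + x) ^ K₁ ≤ 1 := by
      rw [← mul_pow]
      have : (1 - x) * (1 + x) = 1 - x ^ 2 := by ring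
      rw [this]
      apply pow_le_one₀ (by nlinarith) (by nlinarith)
    have h1mxpos : (0:ℝ) ≤ (1 - x) ^ K₁ := pow_nonneg (by linarith) K₁
    have : (1 - x) ^ K₁ * (1 + (K₁:ℝ) * x) ≤ 1 :=
      le_trans (mul_le_mul_of_nonneg_left hbern h1mxpos) hprod
    have hlt : (1 - x) ^ K₁ < 1 / 2 := by nlinarith
    linarith [le_trans hqle hlt.le, hqhalf, hqle]
end

section
/- Let P, K₁, K_r be positive integers with K₁ ≤ K_r ≤ P/2, and let p₁ᵣ = 1 - C(P-K₁,K_r)/C(P,K_r) and p_rr = 1 - C(P-K_r,K_r)/C(P,K_r). Then p_rr ≤ max(2, 4·K_r/K₁) · p₁ᵣ. -/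
set_option maxHeartbeats 1000000

lemma aux_upper (n m k : ℕ) :
    (n + 1 + m).choose (k + 1) ≤ (n + 1).choose (k + 1) + m * (n + m).choose k := by
  induction m with
  | zero => simp
  | succ m ih =>
    have hp : (n + 1 + (m + 1)).choose (k + 1)
        = (n + 1 + m).choose k + (n + 1 + m).choose (k + 1) := by
      rw [show n + 1 + (m + 1) = (n + 1 + m) + 1 from rfl, Nat.choose_succ_succ]
    have hmono : (n + 1 + m).choose k ≤ (n + (m + 1)).choose k :=
      Nat.choose_le_choose k (by omega)
    have hmono2 : m * (n + m).choose k ≤ m * (n + (m + 1)).choose k :=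
      Nat.mul_le_mul le_rfl (Nat.choose_le_choose k (by omega))
    calc (n + 1 + (m + 1)).choose (k + 1)
        = (n + 1 + m).choose k + (n + 1 + m).choose (k + 1) := hp
      _ ≤ (n + (m + 1)).choose k + ((n + 1).choose (k + 1) + m * (n + (m + 1)).choose k) :=
          Nat.add_le_add hmono (le_trans ih (Nat.add_le_add_left hmono2 _))
      _ = (n + 1).choose (k + 1) + (m + 1) * (n + (m + 1)).choose k := by ring

lemma aux_lower (n m k : ℕ) :
    n.choose (k + 1) + m * n.choose k ≤ (n + m).choose (k + 1) := by
  induction m with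
  | zero => simp
  | succ m ih =>
    have hp : (n + (m + 1)).choose (k + 1)
        = (n + m).choose k + (n + m).choose (k + 1) := by
      rw [show n + (m + 1) = (n + m) + 1 from rfl, Nat.choose_succ_succ]
    have hmono : n.choose k ≤ (n + m).choose k := Nat.choose_le_choose k (by omega)
    calc n.choose (k + 1) + (m + 1) * n.choose k
        = n.choose k + (n.choose (k + 1) + m * n.choose k) := by ring
      _ ≤ (n + m).choose k + (n + m).choose (k + 1) := Nat.add_le_add hmono ih
      _ = (n + (m + 1)).choose (k + 1) := hp.symm

/-- p_rr ≤ max(2, 4·K_r/K₁) · p₁ᵣ. -/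
theorem stmt_9 (P K₁ Kr : ℕ) (hP : 0 < P) (hK₁ : 0 < K₁) (hKr : 0 < Kr)
    (h1r : K₁ ≤ Kr) (hrP : 2 * Kr ≤ P)
    (p1r prr : ℝ)
    (hp1r : p1r = 1 - ((P - K₁).choose Kr : ℝ) / (P.choose Kr : ℝ))
    (hprr : prr = 1 - ((P - Kr).choose Kr : ℝ) / (P.choose Kr : ℝ)) :
    prr ≤ max 2 (4 * (Kr : ℝ) / K₁) * p1r := by
  obtain ⟨k, rfl⟩ : ∃ k, Kr = k + 1 := ⟨Kr - 1, by omega⟩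
  have hKP : k + 1 ≤ P := by omega
  -- Natural number inequalities and identities
  have hA : P.choose (k+1) ≤ (P-(k+1)).choose (k+1) + (k+1) * (P-1).choose k := by
    have h := aux_upper (P - (k+1) - 1) (k+1) k
    rw [show P - (k+1) - 1 + 1 + (k+1) = P by omega,
        show P - (k+1) - 1 + 1 = P - (k+1) by omega,
        show P - (k+1) - 1 + (k+1) = P - 1 by omega] at h
    exact h
  have hB : (P-K₁).choose (k+1) + K₁ * (P-K₁).choose k ≤ P.choose (k+1) := by
    have h := aux_lower (P - K₁) K₁ k
    rwa [show P - K₁ + K₁ = P by omega] at h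
  have hI1 : P * (P-1).choose k = P.choose (k+1) * (k+1) := by
    have h := Nat.add_one_mul_choose_eq (P-1) k
    rwa [show P - 1 + 1 = P by omega] at h
  have hI2 : (P-K₁).choose (k+1) * (k+1) ≤ (P-K₁).choose k * P := by
    rw [Nat.choose_succ_right_eq]
    exact Nat.mul_le_mul le_rfl (by omega)
  -- Cast to ℝ
  obtain ⟨N, hNdef⟩ : ∃ N : ℝ, N = (P.choose (k+1) : ℝ) := ⟨_, rfl⟩
  obtain ⟨a, hadef⟩ : ∃ a : ℝ, a = ((P-(k+1)).choose (k+1) : ℝ) := ⟨_, rfl⟩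
  obtain ⟨b, hbdef⟩ : ∃ b : ℝ, b = ((P-K₁).choose (k+1) : ℝ) := ⟨_, rfl⟩
  obtain ⟨c, hcdef⟩ : ∃ c : ℝ, c = ((P-K₁).choose k : ℝ) := ⟨_, rfl⟩
  obtain ⟨d, hddef⟩ : ∃ d : ℝ, d = ((P-1).choose k : ℝ) := ⟨_, rfl⟩
  rw [← hNdef, ← hbdef] at hp1r
  rw [← hNdef, ← hadef] at hprr
  have hNpos : (0:ℝ) < N := by rw [hNdef]; exact_mod_cast Nat.choose_pos hKP
  have hPpos : (0:ℝ) < (P:ℝ) := by exact_mod_cast hP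
  have hK1pos : (0:ℝ) < (K₁:ℝ) := by exact_mod_cast hK₁
  have hann : (0:ℝ) ≤ a := by rw [hadef]; positivity
  have hbnn : (0:ℝ) ≤ b := by rw [hbdef]; positivity
  have hcnn : (0:ℝ) ≤ c := by rw [hcdef]; positivity
  have hAr : N ≤ a + ((k:ℝ)+1) * d := by rw [hNdef, hadef, hddef]; exact_mod_cast hA
  have hBr : b + (K₁:ℝ) * c ≤ N := by rw [hNdef, hbdef, hcdef]; exact_mod_cast hB
  have hI1r : (P:ℝ) * d = N * ((k:ℝ)+1) := by rw [hNdef, hddef]; exact_mod_cast hI1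
  have hI2r : b * ((k:ℝ)+1) ≤ c * (P:ℝ) := by rw [hbdef, hcdef]; exact_mod_cast hI2
  -- upper bound for prr
  have h1 : prr ≤ ((k:ℝ)+1)^2 / P := by
    rw [hprr, show (1:ℝ) - a / N = (N - a) / N by field_simp]
    rw [div_le_div_iff₀ hNpos hPpos]
    have hd : ((k:ℝ)+1)*d*(P:ℝ) = ((k:ℝ)+1)^2*N := by linear_combination ((k:ℝ)+1) * hI1r
    nlinarith [mul_le_mul_of_nonneg_right (show N - a ≤ ((k:ℝ)+1)*d by linarith) hPpos.le]
  have hgoalcast : max 2 (4 * ((((k:ℕ)+1) : ℕ):ℝ) / (K₁:ℝ)) = max 2 (4 * ((k:ℝ)+1) / (K₁:ℝ)) := by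
    push_cast; ring_nf
  rcases le_or_gt p1r (1/2) with hc | hc
  · -- case p1r ≤ 1/2
    have hb2 : N ≤ 2 * b := by
      have hdiv : (1:ℝ)/2 ≤ b / N := by rw [hp1r] at hc; linarith
      have := (le_div_iff₀ hNpos).mp hdiv
      linarith
    have h2 : (K₁:ℝ)*((k:ℝ)+1) / (2*(P:ℝ)) ≤ p1r := by
      rw [hp1r, show (1:ℝ) - b / N = (N - b) / N by field_simp]
      rw [div_le_div_iff₀ (by positivity) hNpos]
      have H1 := mul_le_mul_of_nonneg_right (show (K₁:ℝ)*c ≤ N - b by linarith)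
        (show (0:ℝ) ≤ 2*(P:ℝ) by positivity)
      have H2 := mul_le_mul_of_nonneg_left hI2r hK1pos.le
      have H3 := mul_le_mul_of_nonneg_left hb2
        (show (0:ℝ) ≤ (K₁:ℝ)*((k:ℝ)+1) by positivity)
      linarith [H1, H2, H3]
    have hp1rnn : 0 ≤ p1r := le_trans (by positivity) h2
    have hmax : 4*((k:ℝ)+1)/(K₁:ℝ) ≤ max 2 (4*((k:ℝ)+1)/(K₁:ℝ)) := le_max_right _ _
    rw [hgoalcast]
    calc prr ≤ ((k:ℝ)+1)^2 / P := h1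
      _ ≤ 2*((k:ℝ)+1)^2 / P := by
          have : (0:ℝ) ≤ ((k:ℝ)+1)^2/P := by positivity
          rw [show 2*((k:ℝ)+1)^2 / P = ((k:ℝ)+1)^2/P + ((k:ℝ)+1)^2/P by ring]
          linarith
      _ = (4*((k:ℝ)+1)/(K₁:ℝ)) * ((K₁:ℝ)*((k:ℝ)+1) / (2*(P:ℝ))) := by
          field_simp; ring
      _ ≤ (4*((k:ℝ)+1)/(K₁:ℝ)) * p1r :=
          mul_le_mul_of_nonneg_left h2 (by positivity)
      _ ≤ max 2 (4*((k:ℝ)+1)/(K₁:ℝ)) * p1r :=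
          mul_le_mul_of_nonneg_right hmax hp1rnn
  · -- case p1r > 1/2
    have hprr1 : prr ≤ 1 := by
      rw [hprr]
      have : 0 ≤ a / N := by positivity
      linarith
    rw [hgoalcast]
    have hm : (2:ℝ) ≤ max 2 (4*((k:ℝ)+1)/(K₁:ℝ)) := le_max_left _ _
    nlinarith [mul_le_mul_of_nonneg_right hm (show (0:ℝ) ≤ p1r by linarith)]
end
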